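/- Let A be a real symmetric n×n matrix, X_k a real n×n matrix, S a real n×τ matrix, and let M⁺ be the Moore–Penrose pseudoinverse of M := Sᵀ A² S. Define X_{k+1} := X_k + A S M⁺ Sᵀ (A − A X_k A) S M⁺ Sᵀ A. Then X_{k+1} solves the symmetric-sketch projection problem min ½‖X − X_k‖_F² subject to Sᵀ A X A S = Sᵀ A S; that is, Sᵀ A X_{k+1} A S = Sᵀ A S, and every real n×n matrix X with Sᵀ A X A S = Sᵀ A S satisfies ‖X_{k+1} − X_k‖_F ≤ ‖X − X_k‖_F. -/
import Mathlib

open Matrix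

noncomputable def frobNorm {m n : ℕ} (X : Matrix (Fin m) (Fin n) ℝ) : ℝ :=
  Real.sqrt ((Xᵀ * X).trace)

lemma aux_mul_transpose_self_eq_zero {a b : ℕ} (N : Matrix (Fin a) (Fin b) ℝ)
    (h : N * Nᵀ = 0) : N = 0 := by
  ext i j
  have hi : (N * Nᵀ) i i = 0 := by rw [h]; rfl
  rw [Matrix.mul_apply] at hi
  simp only [Matrix.transpose_apply] at hi
  have hz := (Finset.sum_eq_zero_iff_of_nonneg
    (fun k _ => mul_self_nonneg (N i k))).mp hi j (Finset.mem_univ j)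
  simpa using mul_self_eq_zero.mp hz

lemma aux_trace_nonneg {a b : ℕ} (X : Matrix (Fin a) (Fin b) ℝ) :
    0 ≤ (Xᵀ * X).trace := by
  rw [Matrix.trace]
  apply Finset.sum_nonneg
  intro j _
  rw [Matrix.diag_apply, Matrix.mul_apply]
  apply Finset.sum_nonneg
  intro i _
  simpa using mul_self_nonneg (X i j)

/-- The SAXAS update `X_{k+1} = X_k + A S M⁺ Sᵀ (A − A X_k A) S M⁺ Sᵀ A`,
with `A` symmetric and `M := Sᵀ A² S`, is the projection of `X_k` onto the
symmetric-sketch constraint `Sᵀ A X A S = Sᵀ A S`. -/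
theorem saxas_update_is_projection (n τ : ℕ)
    (A : Matrix (Fin n) (Fin n) ℝ) (hA : Aᵀ = A)
    (Xk : Matrix (Fin n) (Fin n) ℝ)
    (S : Matrix (Fin n) (Fin τ) ℝ)
    (M Mp : Matrix (Fin τ) (Fin τ) ℝ)
    (hM : M = Sᵀ * (A * A) * S)
    (hMp1 : M * Mp * M = M) (hMp2 : Mp * M * Mp = Mp)
    (hMp3 : (M * Mp)ᵀ = M * Mp) (hMp4 : (Mp * M)ᵀ = Mp * M)
    (X1 : Matrix (Fin n) (Fin n) ℝ)
    (hX1 : X1 = Xk + A * S * Mp * Sᵀ * (A - A * Xk * A) * S * Mp * Sᵀ * A) :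
    Sᵀ * A * X1 * A * S = Sᵀ * A * S ∧
    ∀ X : Matrix (Fin n) (Fin n) ℝ, Sᵀ * A * X * A * S = Sᵀ * A * S →
      frobNorm (X1 - Xk) ≤ frobNorm (X - Xk) := by
  set B : Matrix (Fin τ) (Fin n) ℝ := Sᵀ * A with hB
  have hBt : Bᵀ = A * S := by rw [hB, transpose_mul, hA, transpose_transpose]
  have hMB : M = B * Bᵀ := by rw [hM, hB, hBt]; simp only [Matrix.mul_assoc]
  -- K1 : M * Mp * B = B
  have hK1 : M * Mp * B = B := by
    have t2 : B * (Bᵀ * (M * Mp)) = M * (M * Mp) := by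
      rw [← Matrix.mul_assoc, ← hMB]
    have t3 : M * Mp * B * Bᵀ = M := by
      rw [Matrix.mul_assoc (M * Mp) B Bᵀ, ← hMB, hMp1]
    have t4 : M * Mp * B * (Bᵀ * (M * Mp)) = M * (M * Mp) := by
      rw [Matrix.mul_assoc (M * Mp) B _, ← Matrix.mul_assoc B Bᵀ _, ← hMB,
        ← Matrix.mul_assoc, hMp1]
    have hN : (B - M * Mp * B) * (B - M * Mp * B)ᵀ = 0 := by
      have e1 : (B - M * Mp * B)ᵀ = Bᵀ - Bᵀ * (M * Mp) := by
        rw [transpose_sub, Matrix.transpose_mul (M * Mp) B, hMp3]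
      rw [e1, Matrix.mul_sub, Matrix.sub_mul, Matrix.sub_mul, t2, t3, t4, ← hMB]
      abel
    have h0 := aux_mul_transpose_self_eq_zero _ hN
    exact (sub_eq_zero.mp h0).symm
  -- K2' : Mp * M * B = B, then K2 : Bᵀ * (Mp * M) = Bᵀ
  have hK2' : Mp * M * B = B := by
    have u2 : B * (Bᵀ * (Mp * M)) = M := by
      rw [← Matrix.mul_assoc, ← hMB, ← Matrix.mul_assoc, hMp1]
    have u3 : Mp * M * B * Bᵀ = Mp * M * M := by
      rw [Matrix.mul_assoc (Mp * M) B Bᵀ, ← hMB]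
    have u4 : Mp * M * B * (Bᵀ * (Mp * M)) = Mp * M * M := by
      rw [Matrix.mul_assoc (Mp * M) B _, ← Matrix.mul_assoc B Bᵀ _, ← hMB,
        ← Matrix.mul_assoc, Matrix.mul_assoc (Mp * M) M (Mp * M),
        ← Matrix.mul_assoc M Mp M, hMp1]
    have hN : (B - Mp * M * B) * (B - Mp * M * B)ᵀ = 0 := by
      have e1 : (B - Mp * M * B)ᵀ = Bᵀ - Bᵀ * (Mp * M) := by
        rw [transpose_sub, Matrix.transpose_mul (Mp * M) B, hMp4]
      rw [e1, Matrix.mul_sub, Matrix.sub_mul, Matrix.sub_mul, u2, u3, u4, ← hMB]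
      abel
    have h0 := aux_mul_transpose_self_eq_zero _ hN
    exact (sub_eq_zero.mp h0).symm
  have hK2 : Bᵀ * (Mp * M) = Bᵀ := by
    have := congrArg transpose hK2'
    rwa [transpose_mul, hMp4] at this
  -- the residual
  set R : Matrix (Fin τ) (Fin τ) ℝ := B * S - B * Xk * Bᵀ with hRdef
  have hR1 : M * Mp * R = R := by
    rw [hRdef, Matrix.mul_sub, ← Matrix.mul_assoc, hK1,
      ← Matrix.mul_assoc, ← Matrix.mul_assoc, hK1]
  have hR2 : R * (Mp * M) = R := by
    have hBS : B * S = Sᵀ * Bᵀ := by rw [hB, hBt, Matrix.mul_assoc]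
    rw [hRdef, Matrix.sub_mul, hBS, Matrix.mul_assoc Sᵀ Bᵀ _, hK2,
      Matrix.mul_assoc (B * Xk) Bᵀ _, hK2, ← hBS]
  -- the update direction
  have hDelta : X1 - Xk = Bᵀ * Mp * R * Mp * B := by
    rw [hX1, add_sub_cancel_left, hBt, hB, hRdef, hB, hBt]
    simp only [Matrix.mul_sub, Matrix.sub_mul, Matrix.mul_assoc]
  have f1 : B * (Bᵀ * Mp * R * Mp * B) * Bᵀ = R := by
    calc B * (Bᵀ * Mp * R * Mp * B) * Bᵀ = M * (Mp * (R * (Mp * M))) := by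
          rw [hMB]; simp only [Matrix.mul_assoc]
      _ = M * (Mp * R) := by rw [hR2]
      _ = R := by rw [← Matrix.mul_assoc, hR1]
  have hx : X1 = Xk + Bᵀ * Mp * R * Mp * B := by rw [← hDelta]; abel
  have feas : B * X1 * Bᵀ = B * S := by
    rw [hx, Matrix.mul_add, Matrix.add_mul, f1, hRdef]
    abel
  constructor
  · rw [Matrix.mul_assoc (B * X1) A S, ← hBt]
    exact feas
  · intro X hX
    have hXf : B * X * Bᵀ = B * S := by
      rw [hBt]; rw [← Matrix.mul_assoc]; exact hX
    have hW0 : B * (X - X1) * Bᵀ = 0 := by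
      rw [Matrix.mul_sub, Matrix.sub_mul, hXf, feas, sub_self]
    -- orthogonality
    have htr0 : ((X1 - Xk)ᵀ * (X - X1)).trace = 0 := by
      have hT : (X1 - Xk)ᵀ = Bᵀ * ((Mpᵀ * (Rᵀ * Mpᵀ)) * B) := by
        rw [hDelta]
        simp only [transpose_mul, transpose_transpose, Matrix.mul_assoc]
      rw [hT, Matrix.mul_assoc, Matrix.trace_mul_comm]
      have e2 : Mpᵀ * (Rᵀ * Mpᵀ) * B * (X - X1) * Bᵀ
          = Mpᵀ * (Rᵀ * Mpᵀ) * (B * (X - X1) * Bᵀ) := by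
        simp only [Matrix.mul_assoc]
      rw [e2, hW0, Matrix.mul_zero, Matrix.trace_zero]
    have key : ((X1 - Xk)ᵀ * (X1 - Xk)).trace ≤ ((X - Xk)ᵀ * (X - Xk)).trace := by
      have hXW : X - Xk = (X1 - Xk) + (X - X1) := by abel
      have expand : ((X - Xk)ᵀ * (X - Xk)).trace
          = ((X1 - Xk)ᵀ * (X1 - Xk)).trace + ((X - X1)ᵀ * (X - X1)).trace
            + (((X1 - Xk)ᵀ * (X - X1)).trace + (((X1 - Xk)ᵀ * (X - X1))ᵀ).trace) := by
        rw [hXW]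
        simp only [transpose_add, Matrix.add_mul, Matrix.mul_add, Matrix.trace_add,
          transpose_mul, transpose_transpose]
        ring
      rw [expand, Matrix.trace_transpose, htr0]
      have := aux_trace_nonneg (X - X1)
      linarith
    rw [frobNorm, frobNorm]
    exact Real.sqrt_le_sqrt key
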